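/- arXiv:0910.4376 — 2 statements merged into one kernel-verified Lean document; each statement's English description precedes it below -/
import Mathlib

section
/- Let Γ be a finite simple graph. If two acyclic orientations O^1, O^2 of Γ satisfy ν_C(O^1) = ν_C(O^2) for every cycle C in Γ, then O^1 and O^2 are click-equivalent. Consequently, the collection of values (ν_C)_C over all cycles C is a complete invariant of click-equivalence classes of acyclic orientations. -/
variable {V : Type*}

/-- An acyclic orientation of a simple graph `G`. -/
structure AcyclicOrientation (G : SimpleGraph V) where
  dir : V → V → Prop
  dir_adj : ∀ {a b : V}, dir a b → G.Adj a b
  total : ∀ {a b : V}, G.Adj a b → dir a b ∨ dir b a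
  acyclic : ∀ a : V, ¬ Relation.TransGen dir a a

namespace AcyclicOrientation

variable {G : SimpleGraph V}

/-- `v` is a source: no edge points into `v`. -/
def IsSource (O : AcyclicOrientation G) (v : V) : Prop := ∀ a, ¬ O.dir a v

/-- `O'` is obtained from `O` by converting the source `v` into a sink. -/
def ClickAt (O : AcyclicOrientation G) (v : V) (O' : AcyclicOrientation G) : Prop :=
  O.IsSource v ∧ ∀ a b, (O'.dir a b ↔ (((a = v ∨ b = v) ∧ O.dir b a) ∨ (a ≠ v ∧ b ≠ v ∧ O.dir a b)))

/-- One source-to-sink conversion relates `O` and `O'`. -/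
def IsClick (O O' : AcyclicOrientation G) : Prop := ∃ v, O.ClickAt v O'

/-- Click-equivalence: reachability by a finite sequence of clicks. -/
def ClickEquiv (O O' : AcyclicOrientation G) : Prop :=
  Relation.ReflTransGen IsClick O O'

/-- `ClickSeq O c O'` : the list `c` is a click-sequence applicable to `O` with result `O'`. -/
inductive ClickSeq : AcyclicOrientation G → List V → AcyclicOrientation G → Prop
  | nil (O : AcyclicOrientation G) : ClickSeq O [] O
  | cons {O O' O'' : AcyclicOrientation G} {v : V} {c : List V} :
      O.ClickAt v O' → ClickSeq O' c O'' → ClickSeq O (v :: c) O''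

open scoped Classical in
/-- `ν_P(O)`: forward minus backward edges of the closed walk `p` under `O`. -/
noncomputable def nu (O : AcyclicOrientation G) {u : V} (p : G.Walk u u) : ℤ :=
  (p.darts.map (fun d => if O.dir d.toProd.1 d.toProd.2 then (1 : ℤ) else -1)).sum

/-- The `vw`-interval: vertices on a directed path from `v` to `w`. -/
def interval (O : AcyclicOrientation G) (v w : V) : Set V :=
  {a | Relation.ReflTransGen O.dir v a ∧ Relation.ReflTransGen O.dir a w}

end AcyclicOrientation

open AcyclicOrientation

/-- The setoid of click-equivalence (equivalence relation generated by clicks). -/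
def clickSetoid (G : SimpleGraph V) : Setoid (AcyclicOrientation G) :=
  ⟨Relation.EqvGen IsClick, Relation.EqvGen.is_equivalence _⟩

/-- `κ(G)`: the number of click-equivalence classes of acyclic orientations. -/
noncomputable def kappa (G : SimpleGraph V) : ℕ :=
  Nat.card (Quotient (clickSetoid G))

/-- The graph obtained from `G` by contracting the vertex set `I` to the single vertex `vI ∈ I`
(vertices of `I` other than `vI` become isolated). -/
def contractGraph (G : SimpleGraph V) (I : Set V) (vI : V) : SimpleGraph V where
  Adj a b := a ≠ b ∧
    ((a ∉ I ∧ b ∉ I ∧ G.Adj a b) ∨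
     (a = vI ∧ b ∉ I ∧ ∃ x ∈ I, G.Adj x b) ∨
     (b = vI ∧ a ∉ I ∧ ∃ x ∈ I, G.Adj x a))
  symm := by
    constructor
    rintro a b ⟨hne, h⟩
    refine ⟨hne.symm, ?_⟩
    rcases h with ⟨ha, hb, hadj⟩ | ⟨ha, hb, x, hx, hadj⟩ | ⟨hb, ha, x, hx, hadj⟩
    · exact Or.inl ⟨hb, ha, hadj.symm⟩
    · exact Or.inr (Or.inr ⟨ha, hb, x, hx, hadj⟩)
    · exact Or.inr (Or.inl ⟨hb, ha, x, hx, hadj⟩)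
  loopless := by constructor; rintro a ⟨hne, -⟩; exact hne rfl

/-- The orientation of the contracted graph induced by an orientation `O` of `G`. -/
def contractDir {G : SimpleGraph V} (O : AcyclicOrientation G) (I : Set V) (vI : V) :
    V → V → Prop := fun a b =>
  (a ∉ I ∧ b ∉ I ∧ O.dir a b) ∨
  (a = vI ∧ b ∉ I ∧ ∃ x ∈ I, O.dir x b) ∨
  (b = vI ∧ a ∉ I ∧ ∃ x ∈ I, O.dir a x)

/-- The orientation `i → j` iff `i` precedes `j` in the list `l`. -/
def permDir (G : SimpleGraph V) [DecidableEq V] (l : List V) : V → V → Prop :=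
  fun i j => G.Adj i j ∧ l.idxOf i < l.idxOf j

section AuxProof
namespace AcyclicOrientation

variable {G : SimpleGraph V}

open scoped Classical in
noncomputable def wt (O : AcyclicOrientation G) (d : G.Dart) : ℤ :=
  if O.dir d.toProd.1 d.toProd.2 then (1 : ℤ) else -1

noncomputable def nuW (O : AcyclicOrientation G) {a b : V} (p : G.Walk a b) : ℤ :=
  (p.darts.map (wt O)).sum

lemma nu_eq_nuW (O : AcyclicOrientation G) {u : V} (p : G.Walk u u) : nu O p = nuW O p := rfl

lemma not_dir_of_dir (O : AcyclicOrientation G) {a b : V} (h : O.dir a b) : ¬ O.dir b a :=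
  fun h' => O.acyclic a ((Relation.TransGen.single h).tail h')

lemma dir_iff_of_wt_eq {O₁ O₂ : AcyclicOrientation G} {d : G.Dart} (h : wt O₁ d = wt O₂ d) :
    O₁.dir d.toProd.1 d.toProd.2 ↔ O₂.dir d.toProd.1 d.toProd.2 := by
  classical
  by_cases h1 : O₁.dir d.toProd.1 d.toProd.2 <;>
    by_cases h2 : O₂.dir d.toProd.1 d.toProd.2 <;>
      simp only [wt, h1, h2, if_true, if_false] at h <;> simp [h1, h2] <;> omega

lemma wt_eq_one_iff (O : AcyclicOrientation G) (d : G.Dart) :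
    wt O d = 1 ↔ O.dir d.toProd.1 d.toProd.2 := by
  classical
  unfold wt; split_ifs with h1 <;> simp [h1]

lemma wt_eq (O : AcyclicOrientation G) (d : G.Dart) :
    wt O d = 1 ∨ wt O d = -1 := by
  classical
  unfold wt; split_ifs <;> simp

lemma wt_eq_neg_one_iff (O : AcyclicOrientation G) (d : G.Dart) :
    wt O d = -1 ↔ O.dir d.toProd.2 d.toProd.1 := by
  classical
  unfold wt; split_ifs with h1
  · simp only [show (1:ℤ) ≠ -1 by omega, false_iff]
    exact O.not_dir_of_dir h1
  · simp only [true_iff]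
    rcases O.total d.adj with h | h
    · exact absurd h h1
    · exact h

lemma nuW_append (O : AcyclicOrientation G) {a b c : V} (p : G.Walk a b) (q : G.Walk b c) :
    nuW O (p.append q) = nuW O p + nuW O q := by
  simp [nuW, SimpleGraph.Walk.darts_append]

lemma nuW_reverse (O : AcyclicOrientation G) {a b : V} (p : G.Walk a b) :
    nuW O p.reverse = - nuW O p := by
  classical
  simp only [nuW, SimpleGraph.Walk.darts_reverse, List.map_reverse, List.sum_reverse,
    List.map_map]
  have hpt : ∀ d : G.Dart, (wt O ∘ SimpleGraph.Dart.symm) d = - wt O d := by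
    intro d
    simp only [Function.comp_apply]
    rcases O.total d.adj with h | h
    · rw [(O.wt_eq_one_iff d).2 h,
        show O.wt d.symm = -1 from (O.wt_eq_neg_one_iff d.symm).2 h]
    · rw [(O.wt_eq_neg_one_iff d).2 h,
        show O.wt d.symm = 1 from (O.wt_eq_one_iff d.symm).2 h]
      ring
  rw [List.map_congr_left (fun d _ => hpt d)]
  induction p.darts with
  | nil => simp
  | cons d l ih => simp [ih]; ring

lemma nuW_rotate [DecidableEq V] (O : AcyclicOrientation G) {u w : V} (p : G.Walk u u) (h : w ∈ p.support) :
    nuW O (p.rotate w h) = nuW O p := by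
  exact List.Perm.sum_eq (((SimpleGraph.Walk.rotate_darts p w h).map (wt O)).perm)

end AcyclicOrientation

namespace AcyclicOrientation

open SimpleGraph Walk

variable {G : SimpleGraph V}

lemma wt_symm (O : AcyclicOrientation G) (d : G.Dart) : wt O d.symm = - wt O d := by
  rcases O.total d.adj with h | h
  · rw [(O.wt_eq_one_iff d).2 h,
      show O.wt d.symm = -1 from (O.wt_eq_neg_one_iff d.symm).2 h]
  · rw [(O.wt_eq_neg_one_iff d).2 h,
      show O.wt d.symm = 1 from (O.wt_eq_one_iff d.symm).2 h]
    ring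

lemma nuW_backtrack (O : AcyclicOrientation G) {u v : V} (h : G.Adj u v) (h' : G.Adj v u) :
    nuW O (Walk.cons h (Walk.cons h' Walk.nil)) = 0 := by
  have hd : (⟨(v,u),h'⟩ : G.Dart) = (⟨(u,v),h⟩ : G.Dart).symm := rfl
  simp only [nuW, Walk.darts_cons, Walk.darts_nil, List.map_cons, List.map_nil,
    List.sum_cons, List.sum_nil, add_zero, hd, wt_symm]
  ring

lemma length_eq_one_of_mem_edges {u v : V} (q : G.Walk v u) (hq : q.IsPath) (hne : u ≠ v)
    (he : s(u,v) ∈ q.edges) : q.length = 1 := by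
  induction q with
  | nil => simp at he
  | cons h' r ih =>
    rename_i w x _
    rw [Walk.cons_isPath_iff] at hq
    rw [Walk.edges_cons, List.mem_cons] at he
    rcases he with he | he
    · rw [Sym2.eq_iff] at he
      rcases he with ⟨h1, h2⟩ | ⟨h1, h2⟩
      · exact absurd h1 hne
      · subst h1
        rw [(Walk.isPath_iff_eq_nil (p := r)).1 hq.1]
        simp
    · exact absurd (Walk.snd_mem_support_of_mem_edges r he) hq.2

lemma nuW_cons (O : AcyclicOrientation G) {u v w : V} (h : G.Adj u v) (q : G.Walk v w) :
    nuW O (Walk.cons h q) = wt O ⟨(u,v),h⟩ + nuW O q := by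
  simp [nuW]

variable [DecidableEq V] {O₁ O₂ : AcyclicOrientation G}

lemma nuW_closed_eq_aux
    (hcyc : ∀ (u : V) (p : G.Walk u u), p.IsCycle → nuW O₁ p = nuW O₂ p) :
    ∀ (n : ℕ) (u : V) (p : G.Walk u u), p.length ≤ n → nuW O₁ p = nuW O₂ p := by
  intro n
  induction n with
  | zero =>
    intro u p hl
    cases p with
    | nil => rfl
    | cons h q => simp at hl
  | succ n ih =>
    intro u p hl
    cases p with
    | nil => rfl
    | cons h q =>
      rename_i v
      by_cases hnd : (Walk.cons h q).support.tail.Nodup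
      · have hq : q.IsPath := by rw [Walk.isPath_def]; simpa using hnd
        by_cases he : s(u, v) ∈ q.edges
        · have hl1 : q.length = 1 := length_eq_one_of_mem_edges q hq (G.ne_of_adj h) he
          cases q with
          | nil => simp at hl1
          | cons h' r =>
            cases r with
            | nil => rw [nuW_backtrack, nuW_backtrack]
            | cons h'' r' => simp [Walk.length_cons] at hl1
        · exact hcyc u _ ((Walk.cons_isCycle_iff q h).2 ⟨hq, he⟩)
      · rw [List.nodup_iff_count_le_one] at hnd
        push_neg at hnd
        obtain ⟨w, hw2⟩ := hnd
        have hwmem : w ∈ (Walk.cons h q).support := by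
          apply List.mem_of_mem_tail
          rw [← List.count_pos_iff]
          omega
        set p' : G.Walk w w := (Walk.cons h q).rotate w hwmem with hp'
        have hrot := Walk.rotate_darts (Walk.cons h q) w hwmem
        have hnu1 : nuW O₁ p' = nuW O₁ (Walk.cons h q) :=
          List.Perm.sum_eq ((hrot.map (wt O₁)).perm)
        have hnu2 : nuW O₂ p' = nuW O₂ (Walk.cons h q) :=
          List.Perm.sum_eq ((hrot.map (wt O₂)).perm)
        have hlen : p'.length = (Walk.cons h q).length := by
          rw [← Walk.length_darts, ← Walk.length_darts]
          exact hrot.perm.length_eq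
        have hcnt : 2 ≤ p'.support.tail.count w := by
          rw [(Walk.support_rotate (Walk.cons h q) w hwmem).perm.count_eq]
          omega
        rw [← hnu1, ← hnu2]
        cases hp2 : p' with
        | nil => rw [hp2] at hcnt; simp at hcnt
        | cons h2 q2 =>
          rename_i c
          rw [hp2] at hcnt hlen
          have hcnt2 : 2 ≤ q2.support.count w := by simpa using hcnt
          have hu2 : w ∈ q2.support := by
            rw [← List.count_pos_iff]; omega
          set t := q2.takeUntil w hu2 with ht
          set dr := q2.dropUntil w hu2 with hdr
          have hspec : t.append dr = q2 := Walk.take_spec q2 hu2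
          have hdarts : q2.darts = t.darts ++ dr.darts := by
            conv_lhs => rw [← hspec]
            exact Walk.darts_append t dr
          have hsupp : q2.support = t.support ++ dr.support.tail := by
            conv_lhs => rw [← hspec]
            exact Walk.support_append t dr
          have hct : t.support.count w = 1 := Walk.count_support_takeUntil_eq_one q2 hu2
          have hcd : 1 ≤ dr.support.tail.count w := by
            rw [hsupp, List.count_append] at hcnt2; omega
          have hdrlen : 1 ≤ dr.length := by
            have h1 : dr.support.length = dr.length + 1 := Walk.length_support dr
            have h2 : w ∈ dr.support.tail := by rw [← List.count_pos_iff]; omega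
            have h3 : 0 < dr.support.tail.length := List.length_pos_iff.2 (by
              intro hnil; rw [hnil] at h2; simp at h2)
            rw [List.length_tail, h1] at h3
            omega
          have hlsplit : q2.length = t.length + dr.length := by
            conv_lhs => rw [← hspec]
            exact Walk.length_append t dr
          have hlen2 : (Walk.cons h q).length = q.length + 1 := Walk.length_cons h q
          simp only [Walk.length_cons] at hlen hl
          -- recurse
          have e1 : nuW O₁ (Walk.cons h2 t) = nuW O₂ (Walk.cons h2 t) := by
            apply ih
            simp only [Walk.length_cons]
            omega
          have e2 : nuW O₁ dr = nuW O₂ dr := by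
            apply ih
            omega
          rw [nuW_cons, nuW_cons] at e1 ⊢
          have s1 : nuW O₁ q2 = nuW O₁ t + nuW O₁ dr := by
            rw [nuW, hdarts, List.map_append, List.sum_append]; rfl
          have s2 : nuW O₂ q2 = nuW O₂ t + nuW O₂ dr := by
            rw [nuW, hdarts, List.map_append, List.sum_append]; rfl
          rw [s1, s2]
          omega

end AcyclicOrientation

namespace AcyclicOrientation

open SimpleGraph Walk

variable {G : SimpleGraph V}

/-- A canonical representative of the connected component of `x`. -/
noncomputable def root (G : SimpleGraph V) (x : V) : V := (G.connectedComponentMk x).out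

lemma root_reachable (G : SimpleGraph V) (x : V) : G.Reachable (root G x) x := by
  have : G.connectedComponentMk (root G x) = G.connectedComponentMk x :=
    (G.connectedComponentMk x).out_eq
  exact SimpleGraph.ConnectedComponent.eq.mp this

lemma root_eq_of_reachable {a b : V} (h : G.Reachable a b) : root G a = root G b := by
  unfold root
  rw [SimpleGraph.ConnectedComponent.sound h]

/-- A canonical walk from the root of the component of `x` to `x`. -/
noncomputable def pwalk (G : SimpleGraph V) (x : V) : G.Walk (root G x) x :=
  (root_reachable G x).some

lemma nuW_copy (O : AcyclicOrientation G) {a b a' b' : V} (p : G.Walk a b)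
    (ha : a = a') (hb : b = b') : nuW O (p.copy ha hb) = nuW O p := by
  subst ha; subst hb; rfl

/-- The potential function of a pair of orientations. -/
noncomputable def pot (O₁ O₂ : AcyclicOrientation G) (x : V) : ℤ :=
  nuW O₁ (pwalk G x) - nuW O₂ (pwalk G x)

variable {O₁ O₂ : AcyclicOrientation G}

lemma pot_sub (hclosed : ∀ (u : V) (p : G.Walk u u), nuW O₁ p = nuW O₂ p)
    {a b : V} (q : G.Walk a b) :
    pot O₁ O₂ b - pot O₁ O₂ a = nuW O₁ q - nuW O₂ q := by
  have hr : root G b = root G a := root_eq_of_reachable q.reachable.symm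
  have hc := hclosed (root G a)
    ((pwalk G a).append (q.append ((pwalk G b).copy hr rfl).reverse))
  simp only [nuW_append, nuW_reverse, nuW_copy] at hc
  unfold pot
  linarith

lemma pot_adj (hclosed : ∀ (u : V) (p : G.Walk u u), nuW O₁ p = nuW O₂ p)
    {a b : V} (h : G.Adj a b) :
    pot O₁ O₂ b - pot O₁ O₂ a = wt O₁ ⟨(a,b),h⟩ - wt O₂ ⟨(a,b),h⟩ := by
  have hps := pot_sub hclosed (Walk.cons h Walk.nil)
  rw [nuW_cons, nuW_cons] at hps
  simpa [nuW] using hps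

lemma even_nuW_sub {a b : V} (p : G.Walk a b) : Even (nuW O₁ p - nuW O₂ p) := by
  induction p with
  | nil => simp [nuW]
  | cons h q ih =>
    rename_i x y z
    rw [nuW_cons, nuW_cons]
    have hd : Even (wt O₁ (⟨(x,y),h⟩ : G.Dart) - wt O₂ ⟨(x,y),h⟩) := by
      rcases wt_eq O₁ (⟨(x,y),h⟩ : G.Dart) with h1 | h1 <;>
        rcases wt_eq O₂ (⟨(x,y),h⟩ : G.Dart) with h2 | h2 <;>
          rw [h1, h2] <;> decide
    rw [Int.even_iff] at hd ih ⊢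
    omega

lemma pot_even (x : V) : Even (pot O₁ O₂ x) := even_nuW_sub _

end AcyclicOrientation

namespace AcyclicOrientation

open SimpleGraph Walk

variable {G : SimpleGraph V}

lemma ext_dir {O₁ O₂ : AcyclicOrientation G} (h : ∀ a b, O₁.dir a b ↔ O₂.dir a b) :
    O₁ = O₂ := by
  have hd : O₁.dir = O₂.dir := funext fun a => funext fun b => propext (h a b)
  cases O₁; cases O₂
  simp only at hd
  subst hd
  rfl

/-- Clicking a source `v` of `O`: the resulting orientation. -/
def clickOrient (O : AcyclicOrientation G) (v : V) (hs : O.IsSource v) :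
    AcyclicOrientation G where
  dir a b := ((a = v ∨ b = v) ∧ O.dir b a) ∨ (a ≠ v ∧ b ≠ v ∧ O.dir a b)
  dir_adj := by
    rintro a b (⟨_, hd⟩ | ⟨_, _, hd⟩)
    · exact (O.dir_adj hd).symm
    · exact O.dir_adj hd
  total := by
    intro a b hadj
    by_cases ha : a = v
    · subst ha
      rcases O.total hadj with hd | hd
      · exact Or.inr (Or.inl ⟨Or.inr rfl, hd⟩)
      · exact absurd hd (hs b)
    · by_cases hb : b = v
      · subst hb
        rcases O.total hadj with hd | hd
        · exact absurd hd (hs a)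
        · exact Or.inl (Or.inl ⟨Or.inr rfl, hd⟩)
      · rcases O.total hadj with hd | hd
        · exact Or.inl (Or.inr ⟨ha, hb, hd⟩)
        · exact Or.inr (Or.inr ⟨hb, ha, hd⟩)
  acyclic := by
    intro a hta
    set dir' := fun a b => ((a = v ∨ b = v) ∧ O.dir b a) ∨ (a ≠ v ∧ b ≠ v ∧ O.dir a b) with hdir'
    have hnoout : ∀ b, ¬ dir' v b := by
      rintro b (⟨_, hd⟩ | ⟨hne, _, _⟩)
      · exact hs b hd
      · exact hne rfl
    have htrans : ∀ a b, Relation.TransGen dir' a b → a ≠ v → b ≠ v →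
        Relation.TransGen O.dir a b := by
      intro a b h
      induction h with
      | single hd =>
        intro ha hb
        rcases hd with ⟨hav | hbv, _⟩ | ⟨_, _, hd'⟩
        · exact absurd hav ha
        · exact absurd hbv hb
        · exact Relation.TransGen.single hd'
      | tail hac hd ih =>
        intro ha hb
        rename_i c _
        have hc : c ≠ v := fun hcv => hnoout _ (hcv ▸ hd)
        refine (ih ha hc).tail ?_
        rcases hd with ⟨hcv | hbv, _⟩ | ⟨_, _, hd'⟩
        · exact absurd hcv hc
        · exact absurd hbv hb
        · exact hd'
    by_cases ha : a = v
    · subst ha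
      obtain ⟨c, hd, -⟩ := Relation.TransGen.head'_iff.1 hta
      exact hnoout _ hd
    · exact O.acyclic a (htrans a a hta ha ha)

lemma clickAt_clickOrient (O : AcyclicOrientation G) (v : V) (hs : O.IsSource v) :
    O.ClickAt v (O.clickOrient v hs) := ⟨hs, fun _ _ => Iff.rfl⟩

variable [DecidableEq V]

/-- The potential change function for a click at `v`. -/
def gfun (v : V) : V → ℤ := fun x => if x = v then 2 else 0

lemma wt_clickOrient (O : AcyclicOrientation G) (v : V) (hs : O.IsSource v) (d : G.Dart) :
    wt (O.clickOrient v hs) d = wt O d + gfun v d.toProd.2 - gfun v d.toProd.1 := by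
  classical
  rcases d with ⟨⟨a, b⟩, hadj⟩
  by_cases ha : a = v
  · subst ha
    have hb : b ≠ a := fun hb' => G.loopless.irrefl a (hb' ▸ hadj)
    have hd : O.dir a b := (O.total hadj).resolve_right (hs b)
    have h1 : wt O ⟨(a, b), hadj⟩ = 1 := (O.wt_eq_one_iff _).2 hd
    have h2 : wt (O.clickOrient a hs) ⟨(a, b), hadj⟩ = -1 := by
      refine ((O.clickOrient a hs).wt_eq_neg_one_iff _).2 ?_
      exact Or.inl ⟨Or.inr rfl, hd⟩
    rw [h1, h2]
    simp [gfun, hb]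
  · by_cases hb : b = v
    · subst hb
      have hd : O.dir b a := (O.total hadj.symm).resolve_right (hs a)
      have h1 : wt O ⟨(a, b), hadj⟩ = -1 := by
        refine (O.wt_eq_neg_one_iff _).2 hd
      have h2 : wt (O.clickOrient b hs) ⟨(a, b), hadj⟩ = 1 := by
        refine ((O.clickOrient b hs).wt_eq_one_iff _).2 ?_
        exact Or.inl ⟨Or.inr rfl, hd⟩
      rw [h1, h2]
      simp [gfun, ha]
    · have hiff : (O.clickOrient v hs).dir a b ↔ O.dir a b := by
        constructor
        · rintro (⟨hav | hbv, _⟩ | ⟨_, _, hd⟩)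
          · exact absurd hav ha
          · exact absurd hbv hb
          · exact hd
        · intro hd
          exact Or.inr ⟨ha, hb, hd⟩
      have : wt (O.clickOrient v hs) ⟨(a,b), hadj⟩ = wt O ⟨(a,b), hadj⟩ := by
        unfold wt
        exact if_congr hiff rfl rfl
      rw [this]
      simp [gfun, ha, hb]

lemma nuW_clickOrient (O : AcyclicOrientation G) (v : V) (hs : O.IsSource v)
    {a b : V} (p : G.Walk a b) :
    nuW (O.clickOrient v hs) p = nuW O p + gfun v b - gfun v a := by
  induction p with
  | nil => simp [nuW]
  | cons h q ih =>
    rw [nuW_cons, nuW_cons, ih, wt_clickOrient]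
    ring

lemma nuW_clickOrient_closed (O : AcyclicOrientation G) (v : V) (hs : O.IsSource v)
    {u : V} (p : G.Walk u u) :
    nuW (O.clickOrient v hs) p = nuW O p := by
  rw [nuW_clickOrient]
  ring

lemma pot_clickOrient (O₁ O₂ : AcyclicOrientation G) (v : V) (hs : O₁.IsSource v) (x : V) :
    pot (O₁.clickOrient v hs) O₂ x = pot O₁ O₂ x + gfun v x - gfun v (root G x) := by
  unfold pot
  rw [nuW_clickOrient]
  ring

end AcyclicOrientation

namespace AcyclicOrientation

open SimpleGraph

variable [Fintype V] [DecidableEq V] {G : SimpleGraph V}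

open scoped Classical in
/-- The connected component of `x` as a finset. -/
noncomputable def comp (G : SimpleGraph V) (x : V) : Finset V :=
  Finset.univ.filter (fun y => G.connectedComponentMk y = G.connectedComponentMk x)

lemma mem_comp {x y : V} : y ∈ comp G x ↔ G.connectedComponentMk y = G.connectedComponentMk x := by
  classical
  simp [comp]

lemma comp_congr {x y : V} (h : G.connectedComponentMk x = G.connectedComponentMk y) :
    comp G x = comp G y := by
  ext z
  rw [mem_comp, mem_comp, h]

/-- Max of the potential over the component of `x`. -/
noncomputable def maxP (O₁ O₂ : AcyclicOrientation G) (x : V) : ℤ :=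
  (comp G x).sup' ⟨x, mem_comp.2 rfl⟩ (pot O₁ O₂)

/-- The total measure. -/
noncomputable def meas (O₁ O₂ : AcyclicOrientation G) : ℕ :=
  ∑ x : V, (maxP O₁ O₂ x - pot O₁ O₂ x).toNat

variable {O₁ O₂ : AcyclicOrientation G}

lemma maxP_congr {x y : V} (h : G.connectedComponentMk x = G.connectedComponentMk y) :
    maxP O₁ O₂ x = maxP O₁ O₂ y :=
  Finset.sup'_congr _ (comp_congr h) (fun _ _ => rfl)

lemma pot_le_maxP (x : V) : pot O₁ O₂ x ≤ maxP O₁ O₂ x :=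
  Finset.le_sup' _ (mem_comp.2 rfl)

lemma eq_of_meas_eq_zero (hclosed : ∀ (u : V) (p : G.Walk u u), nuW O₁ p = nuW O₂ p)
    (h0 : meas O₁ O₂ = 0) : O₁ = O₂ := by
  have hpm : ∀ x, maxP O₁ O₂ x = pot O₁ O₂ x := by
    intro x
    have h1 : (maxP O₁ O₂ x - pot O₁ O₂ x).toNat = 0 :=
      (Finset.sum_eq_zero_iff.1 h0) x (Finset.mem_univ x)
    have h2 := pot_le_maxP (O₁ := O₁) (O₂ := O₂) x
    omega
  have hadjpot : ∀ a b : V, G.Adj a b → pot O₁ O₂ a = pot O₁ O₂ b := by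
    intro a b hadj
    have h1 : maxP O₁ O₂ a = maxP O₁ O₂ b :=
      maxP_congr (SimpleGraph.ConnectedComponent.sound ⟨Walk.cons hadj Walk.nil⟩)
    rw [← hpm a, ← hpm b, h1]
  apply ext_dir
  intro a b
  by_cases hadj : G.Adj a b
  · have hpa := pot_adj hclosed hadj
    have heq := hadjpot a b hadj
    have hwt : wt O₁ ⟨(a,b),hadj⟩ = wt O₂ ⟨(a,b),hadj⟩ := by omega
    exact dir_iff_of_wt_eq hwt
  · constructor <;> intro hd
    · exact absurd (O₁.dir_adj hd) hadj
    · exact absurd (O₂.dir_adj hd) hadj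

lemma clickEquiv_of_closed_aux :
    ∀ (n : ℕ) (O₁ O₂ : AcyclicOrientation G),
      (∀ (u : V) (p : G.Walk u u), nuW O₁ p = nuW O₂ p) → meas O₁ O₂ ≤ n →
      ClickEquiv O₁ O₂ := by
  intro n
  induction n with
  | zero =>
    intro O₁ O₂ hclosed hm
    rw [eq_of_meas_eq_zero hclosed (Nat.le_zero.1 hm)]
    exact Relation.ReflTransGen.refl
  | succ n ih =>
    intro O₁ O₂ hclosed hm
    by_cases h0 : meas O₁ O₂ = 0
    · rw [eq_of_meas_eq_zero hclosed h0]
      exact Relation.ReflTransGen.refl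
    · have hx0 : ∃ x₀, pot O₁ O₂ x₀ < maxP O₁ O₂ x₀ := by
        by_contra hc
        push_neg at hc
        apply h0
        apply Finset.sum_eq_zero
        intro x _
        have h1 := pot_le_maxP (O₁ := O₁) (O₂ := O₂) x
        have h2 := hc x
        omega
      obtain ⟨x₀, hx₀⟩ := hx0
      set C := comp G x₀ with hCdef
      have hCne : C.Nonempty := ⟨x₀, mem_comp.2 rfl⟩
      set m := C.inf' hCne (pot O₁ O₂) with hmdef
      set s := C.sup' hCne (pot O₁ O₂) with hsdef
      have hsx : maxP O₁ O₂ x₀ = s := rfl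
      have hmsE : Even m := by
        obtain ⟨w, hw, hwe⟩ := Finset.exists_mem_eq_inf' hCne (pot O₁ O₂)
        rw [hmdef, hwe]; exact pot_even w
      have hssE : Even s := by
        obtain ⟨w, hw, hwe⟩ := Finset.exists_mem_eq_sup' hCne (pot O₁ O₂)
        rw [hsdef, hwe]; exact pot_even w
      have hms : m ≤ pot O₁ O₂ x₀ := Finset.inf'_le _ (mem_comp.2 rfl)
      have hmlt : m + 2 ≤ s := by
        rw [Int.even_iff] at hmsE hssE
        rw [hsx] at hx₀
        omega
      set A : Set V := {y | y ∈ C ∧ pot O₁ O₂ y = m} with hAdef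
      have hAne : A.Nonempty := by
        obtain ⟨w, hw, hwe⟩ := Finset.exists_mem_eq_inf' hCne (pot O₁ O₂)
        exact ⟨w, hw, hwe.symm⟩
      haveI : IsTrans V (Relation.TransGen O₁.dir) := ⟨fun _ _ _ => Relation.TransGen.trans⟩
      haveI : IsIrrefl V (Relation.TransGen O₁.dir) := ⟨O₁.acyclic⟩
      have hwf : WellFounded O₁.dir :=
        Subrelation.wf (fun h => Relation.TransGen.single h)
          (Finite.wellFounded_of_trans_of_irrefl _)
      obtain ⟨v, hvA, hvmin⟩ := hwf.has_min A hAne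
      have hvC : v ∈ C := hvA.1
      have hpv : pot O₁ O₂ v = m := hvA.2
      have hmkv : G.connectedComponentMk v = G.connectedComponentMk x₀ := mem_comp.1 hvC
      have hsrc : O₁.IsSource v := by
        intro a hd
        have hadj : G.Adj a v := O₁.dir_adj hd
        have haC : a ∈ C := by
          rw [hCdef, mem_comp]
          exact (SimpleGraph.ConnectedComponent.sound ⟨Walk.cons hadj Walk.nil⟩).trans hmkv
        have hpa := pot_adj hclosed hadj
        have h1 : wt O₁ ⟨(a,v),hadj⟩ = 1 := (O₁.wt_eq_one_iff _).2 hd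
        have hge : m ≤ pot O₁ O₂ a := Finset.inf'_le _ haC
        have hpam : pot O₁ O₂ a = m := by
          rcases wt_eq O₂ ⟨(a,v),hadj⟩ with h2 | h2 <;> omega
        exact hvmin a ⟨haC, hpam⟩ hd
      set O₁' := O₁.clickOrient v hsrc with hO₁'def
      have hclosed' : ∀ (u : V) (p : G.Walk u u), nuW O₁' p = nuW O₂ p := fun u p =>
        (nuW_clickOrient_closed O₁ v hsrc p).trans (hclosed u p)
      have hr₀ : ∀ x ∈ C, root G x = root G x₀ := by
        intro x hx
        unfold root
        rw [mem_comp.1 hx]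
      set c := gfun v (root G x₀) with hcdef
      have hpotC : ∀ x ∈ C, pot O₁' O₂ x = pot O₁ O₂ x + gfun v x - c := by
        intro x hx
        rw [pot_clickOrient O₁ O₂ v hsrc x, hr₀ x hx]
      have hpotOut : ∀ x, x ∉ C → pot O₁' O₂ x = pot O₁ O₂ x := by
        intro x hx
        have hxv : x ≠ v := fun e => hx (e ▸ hvC)
        have hrv : root G x ≠ v := by
          intro e
          apply hx
          have h1 : G.connectedComponentMk (root G x) = G.connectedComponentMk x :=
            (G.connectedComponentMk x).out_eq
          rw [hCdef, mem_comp, ← h1, e, hmkv]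
        rw [pot_clickOrient O₁ O₂ v hsrc x]
        simp [gfun, hxv, hrv]
      have hmaxOut : ∀ x, x ∉ C → maxP O₁' O₂ x = maxP O₁ O₂ x := by
        intro x hx
        apply Finset.sup'_congr _ rfl
        intro y hy
        apply hpotOut
        intro hyC
        apply hx
        rw [hCdef, mem_comp, ← mem_comp.1 hy, mem_comp.1 hyC]
      have hmaxC : ∀ x ∈ C, maxP O₁' O₂ x = s - c := by
        intro x hx
        have hstep : maxP O₁' O₂ x = C.sup' hCne (pot O₁' O₂) :=
          Finset.sup'_congr _ (comp_congr (mem_comp.1 hx)) (fun _ _ => rfl)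
        rw [hstep]
        apply le_antisymm
        · apply Finset.sup'_le
          intro z hz
          rw [hpotC z hz]
          by_cases hzv : z = v
          · subst hzv
            rw [hpv]
            simp only [gfun, if_pos rfl, if_true, eq_self_iff_true]
            omega
          · have hzs : pot O₁ O₂ z ≤ s := Finset.le_sup' _ hz
            simp only [gfun, if_neg hzv]
            omega
        · obtain ⟨w, hwC, hwe⟩ := Finset.exists_mem_eq_sup' hCne (pot O₁ O₂)
          have hwv : w ≠ v := by
            intro e
            rw [e, hpv] at hwe
            omega
          have hww : pot O₁' O₂ w = s - c := by
            rw [hpotC w hwC, ← hwe]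
            simp [gfun, hwv, hsdef]
          rw [← hww]
          exact Finset.le_sup' _ hwC
      have hterm : ∀ x, (maxP O₁' O₂ x - pot O₁' O₂ x).toNat ≤
          (maxP O₁ O₂ x - pot O₁ O₂ x).toNat := by
        intro x
        by_cases hxC : x ∈ C
        · have hmx : maxP O₁ O₂ x = s := (maxP_congr (mem_comp.1 hxC)).trans hsx
          rw [hmaxC x hxC, hpotC x hxC, hmx]
          by_cases hxv : x = v
          · subst hxv
            rw [hpv]
            simp only [gfun, if_pos rfl, if_true, eq_self_iff_true]
            omega
          · simp only [gfun, if_neg hxv]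
            omega
        · rw [hmaxOut x hxC, hpotOut x hxC]
      have htermv : (maxP O₁' O₂ v - pot O₁' O₂ v).toNat <
          (maxP O₁ O₂ v - pot O₁ O₂ v).toNat := by
        have hmx : maxP O₁ O₂ v = s := (maxP_congr hmkv).trans hsx
        rw [hmaxC v hvC, hpotC v hvC, hmx, hpv]
        simp only [gfun, if_pos rfl, if_true, eq_self_iff_true]
        omega
      have hmeas : meas O₁' O₂ < meas O₁ O₂ :=
        Finset.sum_lt_sum (fun i _ => hterm i) ⟨v, Finset.mem_univ v, htermv⟩
      have hrec : ClickEquiv O₁' O₂ := ih O₁' O₂ hclosed' (by omega)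
      exact Relation.ReflTransGen.head ⟨v, clickAt_clickOrient O₁ v hsrc⟩ hrec

end AcyclicOrientation

end AuxProof

/-- `(ν_C)_C` over all cycles is a complete invariant: equal `ν`-values on every cycle imply
click-equivalence. -/
theorem clickEquiv_of_nu_eq [Fintype V] (G : SimpleGraph V)
    (O₁ O₂ : AcyclicOrientation G)
    (h : ∀ (u : V) (p : G.Walk u u), p.IsCycle → nu O₁ p = nu O₂ p) :
    ClickEquiv O₁ O₂ := by
  classical
  have hclosed : ∀ (u : V) (p : G.Walk u u), nuW O₁ p = nuW O₂ p := by
    intro u p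
    exact nuW_closed_eq_aux
      (fun u' p' hc => by rw [← nu_eq_nuW, ← nu_eq_nuW]; exact h u' p' hc)
      p.length u p le_rfl
  exact clickEquiv_of_closed_aux (meas O₁ O₂) O₁ O₂ hclosed le_rfl
end

section
/- Let Γ be a finite simple graph, let e = {v,w} be an edge, and let O be an acyclic orientation of Γ with the edge oriented (v,w). Suppose c = c_1⋯c_m is a click-sequence applicable to O containing exactly one occurrence of w and no occurrences of vertices from the vw-interval I(O) after that occurrence of w. Then there exists a click-sequence c' = c'_1⋯c'_m with the same image c'(O) = c(O) and an interval [p,q] of indices such that c'_j ∈ I(O) if and only if p ≤ j ≤ q. -/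
variable {V : Type*}

open AcyclicOrientation

namespace AcyclicOrientation

variable {G : SimpleGraph V}

-- ### auxiliary lemmas

lemma dir_irrefl (O : AcyclicOrientation G) (a : V) : ¬ O.dir a a :=
  fun h => (G.loopless.irrefl a) (O.dir_adj h)

def clickDir (O : AcyclicOrientation G) (z : V) : V → V → Prop :=
  fun a b => ((a = z ∨ b = z) ∧ O.dir b a) ∨ (a ≠ z ∧ b ≠ z ∧ O.dir a b)

lemma clickDir_not_from (O : AcyclicOrientation G) {z : V} (hz : O.IsSource z) (b : V) :
    ¬ clickDir O z z b := by
  rintro (⟨-, h⟩ | ⟨h, -, -⟩)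
  · exact hz b h
  · exact h rfl

lemma clickDir_elim (O : AcyclicOrientation G) {z a b : V} (hz : O.IsSource z)
    (h : clickDir O z a b) (hb : b ≠ z) : a ≠ z ∧ O.dir a b := by
  rcases h with ⟨ha | ha, h⟩ | ⟨ha, -, h⟩
  · subst ha; exact absurd h (hz b)
  · exact absurd ha hb
  · exact ⟨ha, h⟩

def clickOrientation (O : AcyclicOrientation G) (z : V) (hz : O.IsSource z) :
    AcyclicOrientation G where
  dir := clickDir O z
  dir_adj := by
    rintro a b (⟨-, h⟩ | ⟨-, -, h⟩)
    · exact (O.dir_adj h).symm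
    · exact O.dir_adj h
  total := by
    intro a b hab
    rcases O.total hab with h | h
    · by_cases hza : a = z
      · exact Or.inr (Or.inl ⟨Or.inr hza, h⟩)
      · by_cases hzb : b = z
        · exact Or.inr (Or.inl ⟨Or.inl hzb, h⟩)
        · exact Or.inl (Or.inr ⟨hza, hzb, h⟩)
    · by_cases hza : a = z
      · exact Or.inl (Or.inl ⟨Or.inl hza, h⟩)
      · by_cases hzb : b = z
        · exact Or.inl (Or.inl ⟨Or.inr hzb, h⟩)
        · exact Or.inr (Or.inr ⟨hzb, hza, h⟩)
  acyclic := by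
    intro a ha
    have key : ∀ x y, Relation.TransGen (clickDir O z) x y → y ≠ z →
        x ≠ z ∧ Relation.TransGen O.dir x y := by
      intro x y hxy
      induction hxy with
      | single h => intro hy; obtain ⟨hx, hd⟩ := clickDir_elim O hz h hy
                    exact ⟨hx, Relation.TransGen.single hd⟩
      | tail h1 h2 ih =>
        intro hy
        obtain ⟨hmid, hd⟩ := clickDir_elim O hz h2 hy
        obtain ⟨hx, ht⟩ := ih hmid
        exact ⟨hx, Relation.TransGen.tail ht hd⟩
    by_cases haz : a = z
    · subst haz
      obtain ⟨b, hb, -⟩ := (Relation.TransGen.head'_iff).mp ha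
      exact clickDir_not_from O hz b hb
    · exact O.acyclic a (key a a ha haz).2

lemma clickAt_clickOrientation (O : AcyclicOrientation G) (z : V) (hz : O.IsSource z) :
    O.ClickAt z (O.clickOrientation z hz) := ⟨hz, fun _ _ => Iff.rfl⟩

lemma isSource_iff_of_clickAt {O O' : AcyclicOrientation G} {y : V} (h : O.ClickAt y O')
    {x : V} (hxy : x ≠ y) (hadj : ¬ G.Adj x y) : (O'.IsSource x ↔ O.IsSource x) := by
  have key : ∀ a, O'.dir a x ↔ O.dir a x := by
    intro a
    rw [h.2 a x]
    constructor
    · rintro (⟨ha | ha, hd⟩ | ⟨-, -, hd⟩)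
      · subst ha; exact absurd (O.dir_adj hd) hadj
      · exact absurd ha hxy
      · exact hd
    · intro hd
      by_cases ha : a = y
      · subst ha; exact absurd ((O.dir_adj hd).symm) hadj
      · exact Or.inr ⟨ha, hxy, hd⟩
  constructor
  · intro hs a hd; exact hs a ((key a).mpr hd)
  · intro hs a hd; exact hs a ((key a).mp hd)

lemma swap_clicks {O O₁ O₂ : AcyclicOrientation G} {x y : V}
    (h1 : O.ClickAt x O₁) (h2 : O₁.ClickAt y O₂) (hxy : x ≠ y) (hadj : ¬ G.Adj x y) :
    ∃ P, O.ClickAt y P ∧ P.ClickAt x O₂ := by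
  have f1 : ¬ O.dir x y := fun hh => hadj (O.dir_adj hh)
  have f2 : ¬ O.dir y x := fun hh => hadj ((O.dir_adj hh).symm)
  have hy : O.IsSource y :=
    (isSource_iff_of_clickAt h1 hxy.symm (fun hh => hadj hh.symm)).mp h2.1
  refine ⟨O.clickOrientation y hy, clickAt_clickOrientation O y hy, ?_, ?_⟩
  · exact (isSource_iff_of_clickAt (clickAt_clickOrientation O y hy) hxy hadj).mpr h1.1
  · intro a b
    rw [h2.2 a b]
    have f3 := O.dir_irrefl a
    have f4 := O.dir_irrefl b
    show _ ↔ ((a = x ∨ b = x) ∧ clickDir O y b a) ∨ (a ≠ x ∧ b ≠ x ∧ clickDir O y a b)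
    simp only [h1.2, clickDir]
    by_cases hax : a = x <;> by_cases hbx : b = x <;> by_cases hay : a = y <;>
      by_cases hby : b = y <;> subst_eqs <;> simp_all

lemma clickSeq_exchange_right {O O₃ : AcyclicOrientation G} {z : V} :
    ∀ {a : List V} {b : List V}, ClickSeq O (z :: (a ++ b)) O₃ →
    (∀ y ∈ a, y ≠ z ∧ ¬ G.Adj z y) → ClickSeq O (a ++ z :: b) O₃ := by
  intro a
  induction a generalizing O with
  | nil => intro b h _; simpa using h
  | cons y a ih =>
    intro b h ha
    obtain ⟨hyz, hadj⟩ := ha y List.mem_cons_self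
    rcases h with _ | ⟨hc1, h⟩
    rcases h with _ | ⟨hc2, h⟩
    obtain ⟨P, hp1, hp2⟩ := swap_clicks hc1 hc2 (Ne.symm hyz) (fun hh => hadj hh)
    have : ClickSeq P (a ++ z :: b) O₃ :=
      ih (ClickSeq.cons hp2 h) (fun u hu => ha u (List.mem_cons_of_mem y hu))
    exact ClickSeq.cons hp1 this

lemma clickSeq_append_split {O O₂ : AcyclicOrientation G} :
    ∀ {l r : List V}, ClickSeq O (l ++ r) O₂ → ∃ Q, ClickSeq O l Q ∧ ClickSeq Q r O₂ := by
  intro l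
  induction l generalizing O with
  | nil => intro r h; exact ⟨O, ClickSeq.nil O, h⟩
  | cons x l ih =>
    intro r h
    rcases h with _ | ⟨hc, h⟩
    obtain ⟨Q, h1, h2⟩ := ih h
    exact ⟨Q, ClickSeq.cons hc h1, h2⟩

lemma master [DecidableEq V] {O O₂ : AcyclicOrientation G} {c : List V} (h : ClickSeq O c O₂) :
    ∀ x y, O.dir x y → c.count y ≤ c.count x ∧ c.count x ≤ c.count y + 1 ∧
      (O₂.dir x y ↔ c.count x = c.count y) := by
  induction h with
  | nil O => intro x y hxy; simp [hxy]
  | @cons O O' O'' z c hca hcs ih =>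
    intro x y hxy
    have hne : x ≠ y := fun hh => O.dir_irrefl x (hh ▸ hxy)
    by_cases hzy : z = y
    · subst hzy; exact absurd hxy (hca.1 x)
    by_cases hzx : z = x
    · subst hzx
      have hne' : z ≠ y := hne
      have hd' : O'.dir y z := by
        rw [hca.2 y z]; exact Or.inl ⟨Or.inr rfl, hxy⟩
      obtain ⟨b1, b2, biff⟩ := ih y z hd'
      have hcx : (z :: c).count z = c.count z + 1 := by simp
      have hcy : (z :: c).count y = c.count y := by
        simp [List.count_cons, hne', Ne.symm hne']
      have htot : O''.dir z y ∨ O''.dir y z := O''.total (O.dir_adj hxy)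
      have hnb : ¬ (O''.dir z y ∧ O''.dir y z) := fun ⟨u1, u2⟩ => O''.not_dir_of_dir u1 u2
      rw [hcx, hcy]
      refine ⟨by omega, by omega, ?_⟩
      constructor
      · intro hdir
        have hn : ¬ O''.dir y z := fun hh => hnb ⟨hdir, hh⟩
        have := (not_iff_not.mpr biff).mp hn
        omega
      · intro heq
        have hn : ¬ O''.dir y z := by rw [biff]; omega
        tauto
    · have hd' : O'.dir x y := by
        rw [hca.2 x y]
        exact Or.inr ⟨fun hh => hzx hh.symm, fun hh => hzy hh.symm, hxy⟩
      obtain ⟨b1, b2, biff⟩ := ih x y hd'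
      have hcx : (z :: c).count x = c.count x := by
        simp [List.count_cons, hzx]
      have hcy : (z :: c).count y = c.count y := by
        simp [List.count_cons, hzy]
      rw [hcx, hcy]
      exact ⟨b1, b2, biff⟩

lemma mono [DecidableEq V] {O Q : AcyclicOrientation G} {l : List V} (h : ClickSeq O l Q) {x y : V}
    (hxy : Relation.ReflTransGen O.dir x y) : l.count y ≤ l.count x := by
  induction hxy with
  | refl => exact le_refl _
  | tail h1 h2 ih => exact le_trans (master h _ _ h2).1 ih

lemma srcChar [DecidableEq V] {O O₂ : AcyclicOrientation G} {c l r : List V} {z : V}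
    (h : ClickSeq O c O₂) (hc : c = l ++ z :: r) (u : V) :
    (O.dir u z → l.count u = l.count z + 1) ∧ (O.dir z u → l.count u = l.count z) := by
  subst hc
  obtain ⟨Q, h1, h2⟩ := clickSeq_append_split h
  rcases h2 with _ | ⟨hca, -⟩
  constructor
  · intro hd
    obtain ⟨b1, b2, biff⟩ := master h1 u z hd
    have hn : ¬ Q.dir u z := hca.1 u
    rw [biff] at hn
    omega
  · intro hd
    obtain ⟨b1, b2, biff⟩ := master h1 z u hd
    have hq : Q.dir z u := by
      rcases Q.total (O.dir_adj hd) with hh | hh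
      · exact hh
      · exact absurd hh (hca.1 u)
    exact (biff.mp hq).symm

open Classical in
noncomputable def split3 [DecidableEq V] (O : AcyclicOrientation G) (v w : V) :
    List V → List V → List V × List V × List V
  | _, [] => ([], [], [])
  | acc, z :: m =>
    let p := split3 O v w (acc ++ [z]) m
    if z ∉ O.interval v w ∧ acc.count z = 0 ∧ Relation.ReflTransGen O.dir z w then
      (z :: p.1, p.2.1, p.2.2)
    else if z ∈ O.interval v w then (p.1, z :: p.2.1, p.2.2)
    else (p.1, p.2.1, z :: p.2.2)

variable [DecidableEq V] {O : AcyclicOrientation G} {v w : V}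

lemma split3_len : ∀ (m acc : List V),
    (split3 O v w acc m).1.length + (split3 O v w acc m).2.1.length +
      (split3 O v w acc m).2.2.length = m.length := by
  intro m
  induction m with
  | nil => intro acc; simp [split3]
  | cons z m ih =>
    intro acc
    rw [split3]
    split_ifs <;> simp only [List.length_cons] <;> have := ih (acc ++ [z]) <;> omega

lemma split3_mem_L : ∀ (m acc : List V) (y : V), y ∈ (split3 O v w acc m).1 →
    ∃ l r, m = l ++ y :: r ∧ y ∉ O.interval v w ∧ (acc ++ l).count y = 0 ∧
      Relation.ReflTransGen O.dir y w := by
  intro m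
  induction m with
  | nil => intro acc y hy; simp [split3] at hy
  | cons z m ih =>
    intro acc y hy
    rw [split3] at hy
    split_ifs at hy with h1 h2
    · rcases List.mem_cons.mp hy with rfl | hy
      · exact ⟨[], m, rfl, h1.1, by simpa using h1.2.1, h1.2.2⟩
      · obtain ⟨l, r, hm, hI, hc, hw⟩ := ih (acc ++ [z]) y hy
        exact ⟨z :: l, r, by rw [hm]; rfl, hI, by simpa [List.append_assoc] using hc, hw⟩
    · obtain ⟨l, r, hm, hI, hc, hw⟩ := ih (acc ++ [z]) y hy
      exact ⟨z :: l, r, by rw [hm]; rfl, hI, by simpa [List.append_assoc] using hc, hw⟩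
    · obtain ⟨l, r, hm, hI, hc, hw⟩ := ih (acc ++ [z]) y hy
      exact ⟨z :: l, r, by rw [hm]; rfl, hI, by simpa [List.append_assoc] using hc, hw⟩

lemma split3_mem_B : ∀ (m acc : List V) (y : V), y ∈ (split3 O v w acc m).2.1 →
    y ∈ O.interval v w ∧ y ∈ m := by
  intro m
  induction m with
  | nil => intro acc y hy; simp [split3] at hy
  | cons z m ih =>
    intro acc y hy
    rw [split3] at hy
    split_ifs at hy with h1 h2
    · obtain ⟨hI, hm⟩ := ih (acc ++ [z]) y hy
      exact ⟨hI, List.mem_cons_of_mem z hm⟩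
    · rcases List.mem_cons.mp hy with rfl | hy
      · exact ⟨h2, List.mem_cons_self⟩
      · obtain ⟨hI, hm⟩ := ih (acc ++ [z]) y hy
        exact ⟨hI, List.mem_cons_of_mem z hm⟩
    · obtain ⟨hI, hm⟩ := ih (acc ++ [z]) y hy
      exact ⟨hI, List.mem_cons_of_mem z hm⟩

lemma split3_mem_R : ∀ (m acc : List V) (y : V), y ∈ (split3 O v w acc m).2.2 →
    y ∉ O.interval v w := by
  intro m
  induction m with
  | nil => intro acc y hy; simp [split3] at hy
  | cons z m ih =>
    intro acc y hy
    rw [split3] at hy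
    split_ifs at hy with h1 h2
    · exact ih (acc ++ [z]) y hy
    · exact ih (acc ++ [z]) y hy
    · rcases List.mem_cons.mp hy with rfl | hy
      · exact h2
      · exact ih (acc ++ [z]) y hy

lemma split3_mem_B_of : ∀ (m acc : List V) (z : V), z ∈ m → z ∈ O.interval v w →
    z ∈ (split3 O v w acc m).2.1 := by
  intro m
  induction m with
  | nil => intro acc z hz; simp at hz
  | cons u m ih =>
    intro acc z hz hI
    rw [split3]
    rcases List.mem_cons.mp hz with rfl | hz
    · rw [if_neg (fun hh => hh.1 hI), if_pos hI]
      exact List.mem_cons_self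
    · split_ifs with h1 h2
      · exact ih (acc ++ [u]) z hz hI
      · exact List.mem_cons_of_mem u (ih (acc ++ [u]) z hz hI)
      · exact ih (acc ++ [u]) z hz hI

lemma moveAll {O₃ : AcyclicOrientation G} (c : List V)
    (H1 : ∀ l y r, c = l ++ y :: r → y ∉ O.interval v w → l.count y = 0 →
      Relation.ReflTransGen O.dir y w →
      ∀ z lz rz, l = lz ++ z :: rz →
        ¬ (z ∉ O.interval v w ∧ lz.count z = 0 ∧ Relation.ReflTransGen O.dir z w) →
        z ≠ y ∧ ¬ G.Adj z y)
    (H2 : ∀ l z r, c = l ++ z :: r → z ∉ O.interval v w →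
      ¬ (z ∉ O.interval v w ∧ l.count z = 0 ∧ Relation.ReflTransGen O.dir z w) →
      ∀ y, y ∈ O.interval v w → y ∈ r → z ≠ y ∧ ¬ G.Adj z y) :
    ∀ (m acc : List V) (O₁ : AcyclicOrientation G), c = acc ++ m → ClickSeq O₁ m O₃ →
      ClickSeq O₁ ((split3 O v w acc m).1 ++ (split3 O v w acc m).2.1 ++
        (split3 O v w acc m).2.2) O₃ := by
  intro m
  induction m with
  | nil =>
    intro acc O₁ hc hseq
    cases hseq
    simp only [split3]
    exact ClickSeq.nil _
  | cons z m ih =>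
    rintro acc O₁ hc (_ | ⟨hclick, htail⟩)
    have hc' : c = (acc ++ [z]) ++ m := by simpa [List.append_assoc] using hc
    have hmid := ih (acc ++ [z]) _ hc' htail
    have hLmem : ∀ y ∈ (split3 O v w (acc ++ [z]) m).1,
        ¬ (z ∉ O.interval v w ∧ acc.count z = 0 ∧ Relation.ReflTransGen O.dir z w) →
        y ≠ z ∧ ¬ G.Adj z y := by
      intro y hy hnz
      obtain ⟨ly, ry, hm, hyI, hyc, hyw⟩ := split3_mem_L m (acc ++ [z]) y hy
      have hdec : c = (acc ++ z :: ly) ++ y :: ry := by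
        rw [hc, hm]; simp [List.append_assoc]
      have hcnt : (acc ++ z :: ly).count y = 0 := by
        simpa [List.append_assoc] using hyc
      have hlz : acc ++ z :: ly = acc ++ z :: ly := rfl
      obtain ⟨hne, hadj⟩ := H1 (acc ++ z :: ly) y ry hdec hyI hcnt hyw z acc ly rfl hnz
      exact ⟨hne.symm, hadj⟩
    rw [split3]
    split_ifs with h1 h2
    · simp only [List.cons_append]
      exact ClickSeq.cons hclick (by simpa [List.append_assoc] using hmid)
    · -- z in interval : move z past later L-clicks
      have key : ClickSeq O₁ ((split3 O v w (acc ++ [z]) m).1 ++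
          z :: ((split3 O v w (acc ++ [z]) m).2.1 ++ (split3 O v w (acc ++ [z]) m).2.2)) O₃ := by
        apply clickSeq_exchange_right
        · exact ClickSeq.cons hclick (by simpa [List.append_assoc] using hmid)
        · intro y hy
          exact hLmem y hy (fun hh => hh.1 h2)
      simpa [List.append_assoc] using key
    · -- z is an R-click : move z past later L-clicks and B-clicks
      have key : ClickSeq O₁ (((split3 O v w (acc ++ [z]) m).1 ++
          (split3 O v w (acc ++ [z]) m).2.1) ++ z :: (split3 O v w (acc ++ [z]) m).2.2) O₃ := by
        apply clickSeq_exchange_right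
        · exact ClickSeq.cons hclick (by simpa [List.append_assoc] using hmid)
        · intro y hy
          rcases List.mem_append.mp hy with hy | hy
          · exact hLmem y hy h1
          · obtain ⟨hyI, hym⟩ := split3_mem_B m (acc ++ [z]) y hy
            obtain ⟨hne, hadj⟩ := H2 acc z m hc h2 h1 y hyI hym
            exact ⟨hne.symm, hadj⟩
      simpa [List.append_assoc] using key

end AcyclicOrientation

/-- A click-sequence with exactly one occurrence of `w` (and no interval vertices afterwards) can
be rearranged, with the same image, so that the interval vertices occupy consecutive positions. -/
theorem interval_block_rearrangement [Fintype V] [DecidableEq V] (G : SimpleGraph V)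
    (v w : V) (hvw : G.Adj v w) (O O₂ : AcyclicOrientation G) (hd : O.dir v w)
    (c : List V) (h : ClickSeq O c O₂)
    (hw : c.count w = 1)
    (hafter : ∀ i j : Fin c.length, i < j → c.get i = w → c.get j ∉ interval O v w) :
    ∃ c' : List V, c'.length = c.length ∧ ClickSeq O c' O₂ ∧
      ∃ p q : ℕ, ∀ j : Fin c'.length,
        (c'.get j ∈ interval O v w ↔ (p ≤ j.val ∧ j.val ≤ q)) := by
  classical
  have hwmem : w ∈ c := List.count_pos_iff.mp (by omega)
  obtain ⟨lw, rw', hcw⟩ := List.append_of_mem hwmem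
  subst hcw
  have hcnt : lw.count w + (rw'.count w + 1) = 1 := by
    simpa [List.count_append, List.count_cons] using hw
  have hlw0 : lw.count w = 0 := by omega
  have hrw0 : rw'.count w = 0 := by omega
  have hlen : (lw ++ w :: rw').length = lw.length + (rw'.length + 1) := by simp
  -- no interval vertices after w
  have hrwI : ∀ x ∈ rw', x ∉ interval O v w := by
    intro x hx
    obtain ⟨n, hn, hgn⟩ := List.getElem_of_mem hx
    have hi : lw.length < (lw ++ w :: rw').length := by rw [hlen]; omega
    have hj : lw.length + (n + 1) < (lw ++ w :: rw').length := by rw [hlen]; omega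
    have hgi : (lw ++ w :: rw').get ⟨lw.length, hi⟩ = w := by
      rw [List.get_eq_getElem, List.getElem_append_right (le_refl lw.length)]
      simp
    have hgj : (lw ++ w :: rw').get ⟨lw.length + (n + 1), hj⟩ = x := by
      rw [List.get_eq_getElem, List.getElem_append_right (by omega : lw.length ≤ lw.length + (n + 1))]
      simpa using hgn
    have := hafter ⟨lw.length, hi⟩ ⟨lw.length + (n + 1), hj⟩ (by simp [Fin.lt_def]) hgi
    rwa [hgj] at this
  obtain ⟨Q, hQ1, hQ2⟩ := clickSeq_append_split h
  have hvcnt : lw.count v = 1 := by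
    have := (srcChar h rfl v).1 hd
    omega
  -- every interval vertex is clicked exactly once
  have hIcount : ∀ a, a ∈ interval O v w → (lw ++ w :: rw').count a = 1 := by
    intro a ha
    obtain ⟨hva, haw⟩ := ha
    by_cases haww : a = w
    · subst haww; exact hw
    · have harw : a ∉ rw' := fun hh => (hrwI a hh) ⟨hva, haw⟩
      rcases Relation.ReflTransGen.cases_tail haw with heq | ⟨u, hau, huw⟩
      · exact absurd heq.symm haww
      · have hu1 : lw.count u = 1 := by
          have := (srcChar h rfl u).1 huw
          omega
        have hb1 : lw.count u ≤ lw.count a := mono hQ1 hau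
        have hb2 : lw.count a ≤ lw.count v := mono hQ1 hva
        have : (lw ++ w :: rw').count a = lw.count a := by
          simp [List.count_append, List.count_cons, haww, Ne.symm haww, List.count_eq_zero.mpr harw]
        omega
  -- crossing condition for L-clicks
  have H1 : ∀ l y r, lw ++ w :: rw' = l ++ y :: r → y ∉ interval O v w → l.count y = 0 →
      Relation.ReflTransGen O.dir y w →
      ∀ z lz rz, l = lz ++ z :: rz →
        ¬ (z ∉ interval O v w ∧ lz.count z = 0 ∧ Relation.ReflTransGen O.dir z w) →
        z ≠ y ∧ ¬ G.Adj z y := by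
    intro l y r hdec hyI hyc hyw z lz rz hl hnz
    have hzl : z ∈ l := hl ▸ List.mem_append.mpr (Or.inr (List.mem_cons_self : z ∈ z :: rz))
    have hzcnt : 0 < l.count z := List.count_pos_iff.mpr hzl
    constructor
    · rintro rfl; omega
    · intro hadj
      have hchar := srcChar h hdec z
      rcases O.total hadj with hzy | hyz
      · have hcz : l.count z = l.count y + 1 := hchar.1 hzy
        have hznI : z ∉ interval O v w := by
          intro hzI
          exact hyI ⟨Relation.ReflTransGen.tail hzI.1 hzy, hyw⟩
        have hzw : Relation.ReflTransGen O.dir z w := Relation.ReflTransGen.head hzy hyw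
        have hlz0 : lz.count z = 0 := by
          have : l.count z = lz.count z + (rz.count z + 1) := by
            rw [hl]; simp [List.count_append, List.count_cons]
          omega
        exact hnz ⟨hznI, hlz0, hzw⟩
      · have := hchar.2 hyz
        omega
  -- crossing condition for R-clicks
  have H2 : ∀ l z r, lw ++ w :: rw' = l ++ z :: r → z ∉ interval O v w →
      ¬ (z ∉ interval O v w ∧ l.count z = 0 ∧ Relation.ReflTransGen O.dir z w) →
      ∀ y, y ∈ interval O v w → y ∈ r → z ≠ y ∧ ¬ G.Adj z y := by
    intro l z r hdec hzI hnz y hyI hyr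
    have hney : z ≠ y := fun hh => hzI (hh ▸ hyI)
    refine ⟨hney, fun hadj => ?_⟩
    have hy1 := hIcount y hyI
    rw [hdec] at hy1
    have hry : 0 < r.count y := List.count_pos_iff.mpr hyr
    have hly0 : l.count y = 0 := by
      have he : (l ++ z :: r).count y = l.count y + (r.count y + if z = y then 1 else 0) := by
        simp [List.count_append, List.count_cons]
      rw [he, if_neg hney] at hy1
      omega
    have hchar := srcChar h hdec y
    rcases O.total hadj with hzy | hyz
    · have hcz : l.count y = l.count z := hchar.2 hzy
      exact hnz ⟨hzI, by omega, Relation.ReflTransGen.head hzy hyI.2⟩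
    · have := hchar.1 hyz
      omega
  have hmove := moveAll (O := O) (v := v) (w := w) (O₃ := O₂) (lw ++ w :: rw') H1 H2
    (lw ++ w :: rw') [] O (by simp) h
  set S := split3 O v w [] (lw ++ w :: rw') with hS
  refine ⟨S.1 ++ (S.2.1 ++ S.2.2), ?_, ?_, S.1.length, S.1.length + S.2.1.length - 1, ?_⟩
  · have := split3_len (O := O) (v := v) (w := w) (lw ++ w :: rw') []
    rw [← hS] at this
    simp only [List.length_append, List.length_cons] at this ⊢
    omega
  · simpa [List.append_assoc] using hmove
  · have hwI : w ∈ interval O v w := ⟨Relation.ReflTransGen.single hd, Relation.ReflTransGen.refl⟩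
    have hwB : w ∈ S.2.1 := split3_mem_B_of (lw ++ w :: rw') [] w (by simp) hwI
    have hBpos : 0 < S.2.1.length := List.length_pos_iff.mpr (List.ne_nil_of_mem hwB)
    intro j
    have hj := j.isLt
    simp only [List.length_append] at hj
    simp only [List.get_eq_getElem]
    by_cases h1 : (j : ℕ) < S.1.length
    · rw [List.getElem_append_left h1]
      obtain ⟨_, _, _, hnI, -⟩ := split3_mem_L (lw ++ w :: rw') [] _ (List.getElem_mem h1)
      exact iff_of_false hnI (by omega)
    · push_neg at h1
      rw [List.getElem_append_right h1]
      by_cases h2 : (j : ℕ) - S.1.length < S.2.1.length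
      · rw [List.getElem_append_left h2]
        have hI := (split3_mem_B (lw ++ w :: rw') [] _ (List.getElem_mem h2)).1
        exact iff_of_true hI ⟨h1, by omega⟩
      · push_neg at h2
        have h3 : (j : ℕ) - S.1.length - S.2.1.length < S.2.2.length := by
          have := split3_len (O := O) (v := v) (w := w) (lw ++ w :: rw') []
          rw [← hS] at this
          simp only [List.length_append, List.length_cons] at this hj
          omega
        rw [List.getElem_append_right h2]
        have hnI := split3_mem_R (lw ++ w :: rw') [] _ (List.getElem_mem h3)
        exact iff_of_false hnI (by omega)
end
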